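/- If a graph G has a pendent path of length four or more, then G is not well-forced. -/

import Mathlib

namespace ZF

variable {V : Type*}

/-- The set of vertices forced blue starting from `S`, under the standard color change
rule: a blue vertex with exactly one white neighbor forces that neighbor blue. -/
inductive Forced (G : SimpleGraph V) (S : Set V) : V → Prop
  | init {v : V} : v ∈ S → Forced G S v
  | force {u w : V} : Forced G S u → G.Adj u w →
      (∀ x, G.Adj u x → x ≠ w → Forced G S x) → Forced G S w

/-- `S` is a zero forcing set of `G`. -/
def IsZFS (G : SimpleGraph V) (S : Set V) : Prop := ∀ v, Forced G S v

/-- `S` is a minimal zero forcing set of `G`. -/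
def IsMinimalZFS (G : SimpleGraph V) (S : Set V) : Prop :=
  IsZFS G S ∧ ∀ S' ⊂ S, ¬ IsZFS G S'

/-- The zero forcing number of `G`. -/
noncomputable def zfNum (G : SimpleGraph V) : ℕ :=
  sInf {n | ∃ S : Set V, IsZFS G S ∧ S.ncard = n}

/-- A graph is well-forced if every minimal zero forcing set is minimum. -/
def WellForced (G : SimpleGraph V) : Prop :=
  ∀ S, IsMinimalZFS G S → S.ncard = zfNum G

/-- Degree of a vertex (as the `ncard` of its neighbor set). -/
noncomputable def deg (G : SimpleGraph V) (v : V) : ℕ := (G.neighborSet v).ncard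

end ZF

open ZF SimpleGraph

namespace ZFAux

variable {V : Type*} {G : SimpleGraph V}

lemma forced_mono {S T : Set V} (h : S ⊆ T) : ∀ v, Forced G S v → Forced G T v := by
  intro v hv
  induction hv with
  | init h' => exact Forced.init (h h')
  | force hu hadj _ ihu ihoth => exact Forced.force ihu hadj ihoth

lemma forced_absorb {S T : Set V} (h : ∀ s ∈ T, Forced G S s) :
    ∀ v, Forced G T v → Forced G S v := by
  intro v hv
  induction hv with
  | init h' => exact h _ h'
  | force hu hadj _ ihu ihoth => exact Forced.force ihu hadj ihoth

lemma zfs_mono {S T : Set V} (hS : IsZFS G S) (hsub : S ⊆ T) : IsZFS G T :=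
  fun v => forced_mono hsub v (hS v)

lemma zfs_absorb {S T : Set V} (hT : IsZFS G T) (h : ∀ s ∈ T, Forced G S s) : IsZFS G S :=
  fun v => forced_absorb h v (hT v)

lemma zfs_univ : IsZFS G (Set.univ : Set V) := fun _ => Forced.init trivial

lemma forced_empty {v : V} (h : Forced G (∅ : Set V) v) : False := by
  induction h with
  | init h' => exact h'
  | force _ _ _ ihu _ => exact ihu

lemma forced_closed {B C : Set V} (hBC : B ⊆ C)
    (hcl : ∀ u w, u ∈ C → G.Adj u w → (∀ x, G.Adj u x → x ≠ w → x ∈ C) → w ∈ C) :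
    ∀ v, Forced G B v → v ∈ C := by
  intro v hv
  induction hv with
  | init h' => exact hBC h'
  | force _ hadj _ ihu ihoth => exact hcl _ _ ihu hadj ihoth

/-! ### Chronology and reversal -/

def Blue (C : Set V) (w : ℕ → V) (t : ℕ) : Set V := C ∪ {v | ∃ s < t, w s = v}

def Chron (G : SimpleGraph V) (C : Set V) (k : ℕ) (u w : ℕ → V) : Prop :=
  (∀ t < k, w t ∉ Blue C w t ∧ u t ∈ Blue C w t ∧ G.Adj (u t) (w t) ∧
     ∀ x, G.Adj (u t) x → x ≠ w t → x ∈ Blue C w t) ∧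
  ∀ v, v ∈ Blue C w k

lemma blue_mono {C : Set V} {w : ℕ → V} {s t : ℕ} (h : s ≤ t) : Blue C w s ⊆ Blue C w t := by
  intro v hv
  rcases hv with hv | ⟨r, hr, he⟩
  · exact Or.inl hv
  · exact Or.inr ⟨r, lt_of_lt_of_le hr h, he⟩

lemma chron_exists [Fintype V] [Nonempty V] {B : Set V} (hB : IsZFS G B) :
    ∃ k u w, Chron G B k u w := by
  suffices aux : ∀ n (C : Set V), B ⊆ C → (Set.univ \ C).ncard ≤ n →
      ∃ k u w, Chron G C k u w from
    aux (Set.univ \ B).ncard B le_rfl le_rfl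
  intro n
  induction n with
  | zero =>
    intro C hBC hcard
    have hC : ∀ v, v ∈ C := by
      have h0 : (Set.univ \ C).ncard = 0 := le_antisymm hcard (Nat.zero_le _)
      have h1 : (Set.univ \ C) = ∅ := (Set.ncard_eq_zero (Set.toFinite _)).mp h0
      intro v
      by_contra hv
      have hmem : v ∈ Set.univ \ C := ⟨trivial, hv⟩
      rw [h1] at hmem
      exact hmem
    exact ⟨0, fun _ => Classical.arbitrary V, fun _ => Classical.arbitrary V,
      fun t ht => absurd ht (by omega), fun v => Or.inl (hC v)⟩
  | succ n ih =>
    intro C hBC hcard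
    by_cases hC : ∀ v, v ∈ C
    · exact ⟨0, fun _ => Classical.arbitrary V, fun _ => Classical.arbitrary V,
        fun t ht => absurd ht (by omega), fun v => Or.inl (hC v)⟩
    · push_neg at hC
      obtain ⟨v0, hv0⟩ := hC
      by_cases happ : ∃ u0, u0 ∈ C ∧ ∃ w0, w0 ∉ C ∧ G.Adj u0 w0 ∧
          ∀ x, G.Adj u0 x → x ≠ w0 → x ∈ C
      · obtain ⟨u0, hu0, w0, hw0, hadj0, hoth0⟩ := happ
        have hsub : (Set.univ \ insert w0 C).ncard ≤ n := by
          have h1 : Set.univ \ insert w0 C = (Set.univ \ C) \ {w0} := by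
            ext x; simp [Set.mem_insert_iff]; tauto
          have h2 : w0 ∈ Set.univ \ C := ⟨trivial, hw0⟩
          have h3 : 0 < (Set.univ \ C).ncard :=
            (Set.ncard_pos (Set.toFinite _)).mpr ⟨w0, h2⟩
          rw [h1, Set.ncard_diff_singleton_of_mem h2]
          omega
        obtain ⟨k, u, w, hch1, hch2⟩ :=
          ih (insert w0 C) (hBC.trans (Set.subset_insert _ _)) hsub
        refine ⟨k + 1, fun t => if t = 0 then u0 else u (t - 1),
          fun t => if t = 0 then w0 else w (t - 1), ?_, ?_⟩
        · have hblue : ∀ t, Blue C (fun s => if s = 0 then w0 else w (s - 1)) (t + 1)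
              = Blue (insert w0 C) w t := by
            intro t
            ext x
            simp only [Blue, Set.mem_union, Set.mem_setOf_eq, Set.mem_insert_iff]
            constructor
            · rintro (hx | ⟨s, hs, he⟩)
              · exact Or.inl (Or.inr hx)
              · rcases s with _ | s'
                · simp only [if_pos rfl] at he; exact Or.inl (Or.inl he.symm)
                · simp only [Nat.succ_ne_zero, if_neg, Nat.add_sub_cancel] at he
                  exact Or.inr ⟨s', by omega, he⟩
            · rintro ((hx | hx) | ⟨s, hs, he⟩)
              · exact Or.inr ⟨0, by omega, by simp [hx]⟩
              · exact Or.inl hx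
              · exact Or.inr ⟨s + 1, by omega, by simpa using he⟩
          intro t ht
          rcases t with _ | t'
          · have hb0 : Blue C (fun s => if s = 0 then w0 else w (s - 1)) 0 = C := by
              ext x; simp [Blue]
            simp only [if_pos rfl, hb0]
            exact ⟨hw0, hu0, hadj0, hoth0⟩
          · have ht' : t' < k := by omega
            obtain ⟨a1, a2, a3, a4⟩ := hch1 t' ht'
            simp only [Nat.succ_ne_zero, if_neg, Nat.add_sub_cancel, hblue t']
            exact ⟨a1, a2, a3, a4⟩
        · intro v
          have := hch2 v
          have hblue : ∀ t, Blue C (fun s => if s = 0 then w0 else w (s - 1)) (t + 1)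
              = Blue (insert w0 C) w t := by
            intro t
            ext x
            simp only [Blue, Set.mem_union, Set.mem_setOf_eq, Set.mem_insert_iff]
            constructor
            · rintro (hx | ⟨s, hs, he⟩)
              · exact Or.inl (Or.inr hx)
              · rcases s with _ | s'
                · simp only [if_pos rfl] at he; exact Or.inl (Or.inl he.symm)
                · simp only [Nat.succ_ne_zero, if_neg, Nat.add_sub_cancel] at he
                  exact Or.inr ⟨s', by omega, he⟩
            · rintro ((hx | hx) | ⟨s, hs, he⟩)
              · exact Or.inr ⟨0, by omega, by simp [hx]⟩
              · exact Or.inl hx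
              · exact Or.inr ⟨s + 1, by omega, by simpa using he⟩
          rw [hblue k]
          exact this
      · exfalso
        apply hv0
        refine forced_closed hBC ?_ v0 (hB v0)
        intro u w hu ha ho
        by_contra hw
        exact happ ⟨u, hu, w, hw, ha, ho⟩

lemma chron_rev {C : Set V} {k : ℕ} {u w : ℕ → V} (hch : Chron G C k u w) :
    IsZFS G (Set.univ \ {v | ∃ s < k, u s = v}) := by
  set S' := Set.univ \ {v | ∃ s < k, u s = v} with hS'
  have key : ∀ d, d ≤ k → ∀ v, (∀ s, s < k - d → u s ≠ v) → Forced G S' v := by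
    intro d
    induction d with
    | zero =>
      intro _ v hv
      exact Forced.init ⟨trivial, fun ⟨s, hs, he⟩ => hv s (by omega) he⟩
    | succ d ihd =>
      intro hdk v hv
      set t := k - (d + 1) with ht
      have htk : t < k := by omega
      by_cases hvt : v = u t
      · obtain ⟨hwB, huB, hadj, hoth⟩ := hch.1 t htk
        subst hvt
        refine Forced.force (u := w t) ?_ hadj.symm ?_
        · apply ihd (by omega)
          intro s hs he
          have h1 : u s ∈ Blue C w s := (hch.1 s (by omega)).2.1
          have h2 : Blue C w s ⊆ Blue C w t := blue_mono (by omega)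
          exact hwB (h2 (he ▸ h1))
        · intro x hx hxne
          apply ihd (by omega)
          intro s hs he
          rcases (by omega : s < t ∨ s = t) with hst | hst
          · obtain ⟨hwB', huB', hadj', hoth'⟩ := hch.1 s (by omega)
            have hwtne : w t ≠ w s := by
              intro hh
              exact hwB (Or.inr ⟨s, hst, hh.symm⟩)
            have : w t ∈ Blue C w s := hoth' (w t) (he ▸ hx.symm) hwtne
            exact hwB (blue_mono (by omega) this)
          · exact hxne (hst ▸ he).symm
      · apply ihd (by omega)
        intro s hs he
        rcases (by omega : s < t ∨ s = t) with hst | hst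
        · exact hv s (by omega) he
        · exact hvt (hst ▸ he).symm
  intro v
  exact key k le_rfl v (fun s hs => absurd hs (by omega))

end ZFAux

namespace ZFAux

section Path

variable {V : Type*} {G : SimpleGraph V} {m : ℕ} {p : ℕ → V}

/-- injectivity-based disequality -/
lemma pne (hinj : ∀ j j', j ≤ m → j' ≤ m → p j = p j' → j = j')
    {a b : ℕ} (ha : a ≤ m) (hb : b ≤ m) (hne : a ≠ b) : p a ≠ p b :=
  fun he => hne (hinj a b ha hb he)

variable (hm : 4 ≤ m)
  (hinj : ∀ j j', j ≤ m → j' ≤ m → p j = p j' → j = j')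
  (hchain : ∀ j, j < m → G.Adj (p j) (p (j + 1)))
  (hnbr0 : ∀ x, G.Adj (p 0) x → x = p 1)
  (hnbrS : ∀ i, i + 1 < m → ∀ x, G.Adj (p (i+1)) x → x = p i ∨ x = p (i+2))

include hm hchain hnbr0 in
lemma f0 {S : Set V} (h : Forced G S (p 0)) : Forced G S (p 1) :=
  Forced.force h (hchain 0 (by omega)) (fun x hx hne => absurd (hnbr0 x hx) hne)

include hchain hnbrS in
lemma fUp {S : Set V} (i : ℕ) (h2 : i + 1 < m) (ha : Forced G S (p i))
    (hb : Forced G S (p (i+1))) : Forced G S (p (i+2)) := by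
  refine Forced.force hb (hchain (i+1) h2) ?_
  intro x hx hne
  rcases hnbrS i h2 x hx with h | h
  · exact h ▸ ha
  · exact absurd h hne

include hchain hnbrS in
lemma fDown {S : Set V} (i : ℕ) (h2 : i + 1 < m) (ha : Forced G S (p (i+1)))
    (hb : Forced G S (p (i+2))) : Forced G S (p i) := by
  refine Forced.force ha (hchain i (by omega)).symm ?_
  intro x hx hne
  rcases hnbrS i h2 x hx with h | h
  · exact absurd h hne
  · exact h ▸ hb

include hm hchain hnbr0 hnbrS in
lemma up_all {S : Set V} (h0 : Forced G S (p 0)) : ∀ i, i ≤ m → Forced G S (p i) := by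
  intro i
  induction i using Nat.strong_induction_on with
  | _ i ih =>
    match i with
    | 0 => exact fun _ => h0
    | 1 => exact fun _ => f0 hm hchain hnbr0 h0
    | (i+2) => exact fun h => fUp hchain hnbrS i (by omega) (ih i (by omega) (by omega)) (ih (i+1) (by omega) (by omega))

include hchain hnbrS in
lemma down_all {S : Set V} : ∀ k, k + 1 ≤ m → Forced G S (p k) → Forced G S (p (k+1)) →
    ∀ i, i ≤ k → Forced G S (p i) := by
  intro k
  induction k with
  | zero =>
    intro _ h1 _ i hi
    have : i = 0 := by omega
    exact this ▸ h1
  | succ k ihk =>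
    intro hk h1 h2 i hi
    have hpk : Forced G S (p k) := fDown hchain hnbrS k (by omega) h1 h2
    rcases (by omega : i ≤ k ∨ i = k + 1) with h | h
    · exact ihk (by omega) hpk h1 i h
    · exact h ▸ h1

include hm hchain hnbr0 hnbrS in
lemma pair12_all {S : Set V} (h1 : Forced G S (p 1)) (h2 : Forced G S (p 2)) :
    ∀ i, i ≤ m → Forced G S (p i) :=
  up_all hm hchain hnbr0 hnbrS (fDown hchain hnbrS 0 (by omega) h1 h2)

include hnbr0 hnbrS in
lemma down_lemma {S : Set V} (k : ℕ) (hk : k < m) (hS : ∀ i, i ≤ k → p i ∉ S) :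
    ∀ v, Forced G S v → ∀ i, i ≤ k → v = p i → Forced G S (p (k+1)) := by
  intro v hv
  induction hv with
  | @init v hvS =>
    intro i hik he
    exact absurd (he ▸ hvS) (hS i hik)
  | @force u w hu hadj hoth ihu ihoth =>
    intro i hik he
    subst he
    rcases i with _ | i'
    · have hu1 : u = p 1 := hnbr0 u hadj.symm
      by_cases h1 : k = 0
      · subst h1; exact hu1 ▸ hu
      · exact ihu 1 (by omega) hu1
    · rcases hnbrS i' (by omega) u hadj.symm with h | h
      · exact ihu i' (by omega) h
      · by_cases he2 : i' + 2 = k + 1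
        · rw [← he2]; exact h ▸ hu
        · exact ihu (i'+2) (by omega) h

include hinj hchain hnbr0 hnbrS in
lemma del {S : Set V} (j : ℕ) (hj1 : 1 ≤ j) (hj2 : j + 2 ≤ m)
    (hS : ∀ i, i ≤ j + 1 → p i ∉ S) :
    ∀ v, Forced G (insert (p j) S) v →
      (∀ i, i < j → v = p i → Forced G S (p (j+1))) ∧
      ((∀ i, i ≤ j → v ≠ p i) → Forced G S v) := by
  intro v hv
  induction hv with
  | @init v hvS =>
    constructor
    · intro i hij he
      rcases hvS with h | h
      · exfalso
        rw [he] at h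
        exact absurd (hinj i j (by omega) (by omega) h) (by omega)
      · exact absurd (he ▸ h) (hS i (by omega))
    · intro hne
      rcases hvS with h | h
      · exact absurd h (hne j le_rfl)
      · exact Forced.init h
  | @force u w hu hadj hoth ihu ihoth =>
    constructor
    · -- part 1 : w = p i, i < j  ⇒  Forced S (p (j+1))
      intro i hij he
      subst he
      rcases i with _ | i'
      · have hu1 : u = p 1 := hnbr0 u hadj.symm
        by_cases h1j : 1 = j
        · -- u = p j , use other-neighbor p (j+1)
          have hj : j = 1 := h1j.symm
          subst hj
          have hadjx : G.Adj u (p (1+1)) := by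
            rw [hu1]; exact hchain 1 (by omega)
          have hnex : p (1+1) ≠ p 0 := pne hinj (by omega) (by omega) (by omega)
          exact (ihoth (p (1+1)) hadjx hnex).2
            (fun i hi => pne hinj (by omega) (by omega) (by omega))
        · exact ihu.1 1 (by omega) hu1
      · rcases hnbrS i' (by omega) u hadj.symm with h | h
        · exact ihu.1 i' (by omega) h
        · by_cases hej : i' + 2 = j
          · have hadjx : G.Adj u (p (j+1)) := by
              rw [h, hej]; exact hchain j (by omega)
            have hnex : p (j+1) ≠ p (i'+1) := pne hinj (by omega) (by omega) (by omega)
            exact (ihoth (p (j+1)) hadjx hnex).2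
              (fun i hi => pne hinj (by omega) (by omega) (by omega))
          · exact ihu.1 (i'+2) (by omega) h
    · -- part 2
      intro hall
      by_cases hw1 : w = p (j+1)
      · subst hw1
        rcases hnbrS j (by omega) u hadj.symm with h | h
        · -- u = p j
          obtain ⟨jm, rfl⟩ : ∃ jm, j = jm + 1 := ⟨j - 1, by omega⟩
          have hadjx : G.Adj u (p jm) := by
            rw [h]; exact (hchain jm (by omega)).symm
          have hnex : p jm ≠ p (jm + 1 + 1) := pne hinj (by omega) (by omega) (by omega)
          exact (ihoth (p jm) hadjx hnex).1 jm (by omega) rfl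
        · -- u = p (j+2)
          have huS : Forced G S u := ihu.2 (by
            rw [h]; intro i hi; exact pne hinj (by omega) (by omega) (by omega))
          refine Forced.force huS (by rw [h]; exact (hchain (j+1) (by omega)).symm) ?_
          intro x hx hxne
          have hxp : ∀ i, i ≤ j → x ≠ p i := by
            intro i hi hxe
            rw [hxe, h] at hx
            rcases i with _ | i'
            · have := hnbr0 (p (j+2)) hx.symm
              exact absurd (hinj (j+2) 1 (by omega) (by omega) this) (by omega)
            · rcases hnbrS i' (by omega) (p (j+2)) hx.symm with hh | hh
              · exact absurd (hinj (j+2) i' (by omega) (by omega) hh) (by omega)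
              · exact absurd (hinj (j+2) (i'+2) (by omega) (by omega) hh) (by omega)
          exact (ihoth x hx hxne).2 hxp
      · -- generic w
        have huP : ∀ i, i ≤ j → u ≠ p i := by
          intro i hi hue
          rw [hue] at hadj
          rcases i with _ | i'
          · exact hall 1 (by omega) (hnbr0 w hadj)
          · rcases hnbrS i' (by omega) w hadj with h | h
            · exact hall i' (by omega) h
            · rcases (by omega : i' + 2 ≤ j ∨ i' + 2 = j + 1) with hc | hc
              · exact hall (i'+2) hc h
              · exact hw1 (by rw [h, hc])
        by_cases hbad : ∃ x, G.Adj u x ∧ x ≠ w ∧ ∃ i, i ≤ j ∧ x = p i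
        · obtain ⟨x, hxadj, hxw, i, hij, hxe⟩ := hbad
          rw [hxe] at hxadj
          have hu_eq : u = p (j+1) := by
            rcases i with _ | i'
            · exact absurd (hnbr0 u hxadj.symm) (huP 1 (by omega))
            · rcases hnbrS i' (by omega) u hxadj.symm with h | h
              · exact absurd h (huP i' (by omega))
              · rcases (by omega : i' + 2 ≤ j ∨ i' + 2 = j + 1) with hc | hc
                · exact absurd h (huP (i'+2) hc)
                · rw [h, hc]
          have hw_eq : w = p (j+2) := by
            have hadj' : G.Adj (p (j+1)) w := hu_eq ▸ hadj
            rcases hnbrS j (by omega) w hadj' with h | h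
            · exact absurd h (hall j le_rfl)
            · exact h
          have hujp : Forced G S (p (j+1)) := hu_eq ▸ (ihu.2 (by
            rw [hu_eq]; intro i' hi'; exact pne hinj (by omega) (by omega) (by omega)))
          rw [hw_eq]
          exact down_lemma hnbr0 hnbrS (j+1) (by omega) hS (p (j+1)) hujp (j+1) le_rfl rfl
        · push_neg at hbad
          refine Forced.force (ihu.2 huP) hadj ?_
          intro x hx hxw
          refine (ihoth x hx hxw).2 ?_
          intro i hi hxe
          exact hbad x hx hxw i hi hxe

include hinj hchain hnbr0 hnbrS in
lemma delc {S : Set V} (j : ℕ) (hj1 : 1 ≤ j) (hj2 : j + 2 ≤ m)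
    (hS : ∀ i, i ≤ j + 1 → p i ∉ S)
    (hz : IsZFS G (insert (p j) S)) : IsZFS G S := by
  have h2 : ∀ v, (∀ i, i ≤ j → v ≠ p i) → Forced G S v := fun v hv =>
    (del hinj hchain hnbr0 hnbrS j hj1 hj2 hS v (hz v)).2 hv
  have ha : Forced G S (p (j+1)) :=
    h2 _ (fun i hi => pne hinj (by omega) (by omega) (by omega))
  have hb : Forced G S (p (j+2)) :=
    h2 _ (fun i hi => pne hinj (by omega) (by omega) (by omega))
  have hd := down_all hchain hnbrS (j+1) (by omega) ha hb
  intro v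
  by_cases hv : ∀ i, i ≤ j → v ≠ p i
  · exact h2 v hv
  · push_neg at hv
    obtain ⟨i, hij, he⟩ := hv
    exact he ▸ hd i (by omega)

end Path

end ZFAux


open ZFAux in
/-- If a graph `G` has a pendent path of length four or more (a path
`p 0, p 1, …, p m` with `m ≥ 4`, where `p 0` has degree one in `G` and the vertices
`p 1, …, p (m-1)` have degree two in `G`), then `G` is not well-forced. -/
theorem pendent_path_not_wellforced {V : Type*} [Fintype V] (G : SimpleGraph V)
    (m : ℕ) (hm : 4 ≤ m) (p : ℕ → V)
    (hinj : ∀ j j', j ≤ m → j' ≤ m → p j = p j' → j = j')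
    (hchain : ∀ j, j < m → G.Adj (p j) (p (j + 1)))
    (hleaf : deg G (p 0) = 1)
    (hmid : ∀ j, 1 ≤ j → j < m → deg G (p j) = 2) :
    ¬ WellForced G := by
  have hleaf' : (G.neighborSet (p 0)).ncard = 1 := hleaf
  have hmid' : ∀ j, 1 ≤ j → j < m → (G.neighborSet (p j)).ncard = 2 := hmid
  clear hleaf hmid
  rename' hleaf' => hleaf, hmid' => hmid
  unfold WellForced
  haveI : Nonempty V := ⟨p 0⟩
  -- neighborhood facts
  have hnbr0 : ∀ x, G.Adj (p 0) x → x = p 1 := by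
    obtain ⟨a, ha⟩ := Set.ncard_eq_one.mp hleaf
    have h1 : p 1 ∈ G.neighborSet (p 0) := (G.mem_neighborSet _ _).mpr (hchain 0 (by omega))
    rw [ha, Set.mem_singleton_iff] at h1
    intro x hx
    have hx' : x ∈ G.neighborSet (p 0) := (G.mem_neighborSet _ _).mpr hx
    rw [ha, Set.mem_singleton_iff] at hx'
    rw [hx', ← h1]
  have hnbrS : ∀ i, i + 1 < m → ∀ x, G.Adj (p (i+1)) x → x = p i ∨ x = p (i+2) := by
    intro i him x hx
    obtain ⟨a, b, hab, hset⟩ := Set.ncard_eq_two.mp (hmid (i+1) (by omega) (by omega))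
    have h1 : p i ∈ G.neighborSet (p (i+1)) :=
      (G.mem_neighborSet _ _).mpr (hchain i (by omega)).symm
    have h2 : p (i+2) ∈ G.neighborSet (p (i+1)) :=
      (G.mem_neighborSet _ _).mpr (hchain (i+1) him)
    have hx' : x ∈ G.neighborSet (p (i+1)) := (G.mem_neighborSet _ _).mpr hx
    rw [hset] at h1 h2 hx'
    have hne : p i ≠ p (i+2) := pne hinj (by omega) (by omega) (by omega)
    simp only [Set.mem_insert_iff, Set.mem_singleton_iff] at h1 h2 hx'
    rcases h1 with h1 | h1 <;> rcases h2 with h2 | h2 <;> rcases hx' with h | h <;>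
      first
        | (exact absurd (h1.trans h2.symm) hne)
        | (left; rw [h, ← h1])
        | (right; rw [h, ← h2])
  -- zero forcing number facts
  set q := zfNum G with hq
  have hqset : {n | ∃ S : Set V, IsZFS G S ∧ S.ncard = n}.Nonempty :=
    ⟨(Set.univ : Set V).ncard, Set.univ, zfs_univ, rfl⟩
  obtain ⟨B, hBz, hBcard0⟩ := Nat.sInf_mem hqset
  have hBcard : B.ncard = q := hBcard0
  have hqle : ∀ S : Set V, IsZFS G S → q ≤ S.ncard := fun S h => Nat.sInf_le ⟨S, h, rfl⟩
  have hq1 : 1 ≤ q := by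
    by_contra hq0
    have hzero : q = 0 := by omega
    rw [hzero] at hBcard
    have hBe : B = ∅ := (Set.ncard_eq_zero (Set.toFinite _)).mp hBcard
    exact forced_empty (hBe ▸ hBz (p 0))
  set Pset : Set V := {v | ∃ i, i ≤ m ∧ p i = v} with hPset
  -- Step 1: a ZFS X of size ≤ q meeting the path
  have hX : ∃ X : Set V, IsZFS G X ∧ X.ncard ≤ q ∧ ∃ y, y ∈ X ∧ y ∈ Pset := by
    by_cases hBP : ∃ i, i ≤ m ∧ p i ∈ B
    · obtain ⟨i, hi, hmem⟩ := hBP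
      exact ⟨B, hBz, le_of_eq hBcard, p i, hmem, ⟨i, hi, rfl⟩⟩
    · push_neg at hBP
      obtain ⟨k, u, w, hch⟩ := chron_exists hBz
      set S' := Set.univ \ {v | ∃ s < k, u s = v} with hS'
      have hzS' : IsZFS G S' := chron_rev hch
      have hp0S' : p 0 ∈ S' := by
        refine ⟨trivial, ?_⟩
        rintro ⟨s, hs, he⟩
        have hws : w s = p 1 := hnbr0 (w s) (he ▸ (hch.1 s hs).2.2.1)
        rcases (hch.1 s hs).2.1 with husB | ⟨r, hr, her⟩
        · exact hBP 0 (by omega) (he ▸ husB)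
        · have hur : u r = p 1 := by
            apply hnbr0 (u r)
            have hadj := (hch.1 r (by omega)).2.2.1
            rw [her, he] at hadj
            exact hadj.symm
          have h1 : u r ∈ Blue B w r := (hch.1 r (by omega)).2.1
          have h2 : Blue B w r ⊆ Blue B w s := blue_mono (by omega)
          exact (hch.1 s hs).1 (by rw [hws, ← hur]; exact h2 h1)
      have hIio : ∀ n : ℕ, (Set.Iio n : Set ℕ).ncard = n := by
        intro n
        have hrange : (Set.Iio n : Set ℕ) = ↑(Finset.range n) := by ext x; simp
        rw [hrange, Set.ncard_coe_finset, Finset.card_range]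
      have hcard : S'.ncard ≤ q := by
        have hune : ∀ s t, s < t → t < k → u s ≠ u t := by
          intro s t hst htk heq
          have hwt := (hch.1 t htk).1
          have hadj : G.Adj (u s) (w t) := by
            have := (hch.1 t htk).2.2.1
            rwa [← heq] at this
          have hwne : w t ≠ w s := by
            intro hh
            exact hwt (Or.inr ⟨s, hst, hh.symm⟩)
          have hmem := (hch.1 s (by omega)).2.2.2 (w t) hadj hwne
          exact hwt (blue_mono (by omega : s ≤ t) hmem)
        have huinj : Set.InjOn u (Set.Iio k) := by
          intro s hs t ht he
          by_contra hne
          rcases (by omega : s < t ∨ t < s) with hc | hc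
          · exact hune s t hc ht he
          · exact hune t s hc hs he.symm
        have h1 : {v | ∃ s < k, u s = v} = u '' (Set.Iio k) := by
          ext v; simp [Set.mem_image, eq_comm]
        have h2 : ({v | ∃ s < k, u s = v}).ncard = k := by
          rw [h1, Set.ncard_image_of_injOn huinj, hIio]
        have h3 : S'.ncard = (Set.univ : Set V).ncard - k := by
          rw [hS', Set.ncard_diff (Set.subset_univ _) (Set.toFinite _), h2]
        have h4 : (Set.univ : Set V).ncard ≤ B.ncard + k := by
          have hBlue : Blue B w k = B ∪ {v | ∃ s < k, w s = v} := rfl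
          have hsub : (Set.univ : Set V) ⊆ B ∪ {v | ∃ s < k, w s = v} := by
            intro v _
            have := hch.2 v
            rwa [hBlue] at this
          have h5 := Set.ncard_le_ncard hsub (Set.toFinite _)
          have h6 : ({v | ∃ s < k, w s = v}).ncard ≤ k := by
            have h7 : {v | ∃ s < k, w s = v} = w '' (Set.Iio k) := by
              ext v; simp [Set.mem_image, eq_comm]
            rw [h7]
            calc (w '' (Set.Iio k)).ncard ≤ (Set.Iio k : Set ℕ).ncard :=
                  Set.ncard_image_le (Set.finite_Iio _)
              _ = k := hIio k
          calc (Set.univ : Set V).ncard ≤ (B ∪ {v | ∃ s < k, w s = v}).ncard := h5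
            _ ≤ B.ncard + ({v | ∃ s < k, w s = v}).ncard := Set.ncard_union_le _ _
            _ ≤ B.ncard + k := by omega
        omega
      exact ⟨S', hzS', hcard, p 0, hp0S', ⟨0, by omega, rfl⟩⟩
  obtain ⟨X, hXz, hXcard, y, hyX, hyP⟩ := hX
  set Y : Set V := X \ Pset with hY
  have hYP : ∀ i, i ≤ m → p i ∉ Y := fun i hi h => h.2 ⟨i, hi, rfl⟩
  have hYcard : Y.ncard ≤ q - 1 := by
    have h1 : Y ⊆ X \ {y} := by
      intro v hv
      refine ⟨hv.1, ?_⟩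
      intro he
      rw [Set.mem_singleton_iff] at he
      exact hv.2 (by rw [he]; exact hyP)
    have h2 := Set.ncard_le_ncard h1 (Set.toFinite _)
    rw [Set.ncard_diff_singleton_of_mem hyX] at h2
    omega
  -- S0 = {p 0} ∪ Y is a ZFS of size ≤ q
  set S0 : Set V := insert (p 0) Y with hS0
  have hS0z : IsZFS G S0 := by
    apply zfs_absorb hXz
    intro s hs
    by_cases hsP : s ∈ Pset
    · obtain ⟨i, hi, rfl⟩ := hsP
      exact up_all hm hchain hnbr0 hnbrS (Forced.init (Set.mem_insert _ _)) i hi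
    · exact Forced.init (Set.mem_insert_of_mem _ ⟨hs, hsP⟩)
  have hS0card : S0.ncard ≤ Y.ncard + 1 := Set.ncard_insert_le _ _
  have hYnotz : ¬ IsZFS G Y := by
    intro h
    have := hqle Y h
    omega
  -- the witness W
  set W : Set V := insert (p 1) (insert (p 2) Y) with hW
  have hWz : IsZFS G W := by
    apply zfs_absorb hS0z
    intro s hs
    have hp1 : Forced G W (p 1) := Forced.init (Set.mem_insert _ _)
    have hp2 : Forced G W (p 2) := Forced.init (Set.mem_insert_of_mem _ (Set.mem_insert _ _))
    rcases hs with h | h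
    · exact h ▸ pair12_all hm hchain hnbr0 hnbrS hp1 hp2 0 (by omega)
    · exact Forced.init (Set.mem_insert_of_mem _ (Set.mem_insert_of_mem _ h))
  have hp1Y : p 1 ∉ insert (p 2) Y := by
    intro h
    rcases h with h | h
    · exact pne hinj (by omega) (by omega) (by omega) h
    · exact hYP 1 (by omega) h
  have hp2Y : p 2 ∉ Y := hYP 2 (by omega)
  have hWcard : W.ncard = Y.ncard + 2 := by
    rw [hW, Set.ncard_insert_of_notMem hp1Y (Set.toFinite _),
      Set.ncard_insert_of_notMem hp2Y (Set.toFinite _)]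
  have hWne : W.ncard ≠ q := by
    intro h
    have h1 := hqle S0 hS0z
    omega
  -- minimality of W
  have hWmin : ∀ S'', S'' ⊂ W → ¬ IsZFS G S'' := by
    intro S'' hss hz''
    obtain ⟨x, hxW, hxS⟩ := Set.exists_of_ssubset hss
    have hWx : IsZFS G (W \ {x}) := by
      apply zfs_mono hz''
      intro s hs
      exact ⟨hss.1 hs, fun he => hxS (by rw [← Set.mem_singleton_iff.mp he]; exact hs)⟩
    rcases hxW with hx1 | hx2Y
    · -- x = p 1 : delete p 1, use delc with j = 2
      have hrw : W \ {p 1} = insert (p 2) Y := by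
        ext v
        simp only [hW, Set.mem_diff, Set.mem_insert_iff, Set.mem_singleton_iff]
        constructor
        · rintro ⟨h | h | h, hne⟩
          · exact absurd h hne
          · exact Or.inl h
          · exact Or.inr h
        · rintro (h | h)
          · exact ⟨Or.inr (Or.inl h), by
              rw [h]; exact (pne hinj (by omega) (by omega) (by omega)).symm⟩
          · exact ⟨Or.inr (Or.inr h), fun he => hYP 1 (by omega) (he ▸ h)⟩
      rw [hx1, hrw] at hWx
      exact hYnotz (delc hinj hchain hnbr0 hnbrS 2 (by omega) (by omega)
        (fun i hi => hYP i (by omega)) hWx)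
    rcases hx2Y with hx2 | hxY
    · -- x = p 2 : delete p 2, use delc with j = 1
      have hrw : W \ {p 2} = insert (p 1) Y := by
        ext v
        simp only [hW, Set.mem_diff, Set.mem_insert_iff, Set.mem_singleton_iff]
        constructor
        · rintro ⟨h | h | h, hne⟩
          · exact Or.inl h
          · exact absurd h hne
          · exact Or.inr h
        · rintro (h | h)
          · exact ⟨Or.inl h, by
              rw [h]; exact (pne hinj (by omega) (by omega) (by omega))⟩
          · exact ⟨Or.inr (Or.inr h), fun he => hYP 2 (by omega) (he ▸ h)⟩
      rw [hx2, hrw] at hWx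
      exact hYnotz (delc hinj hchain hnbr0 hnbrS 1 (by omega) (by omega)
        (fun i hi => hYP i (by omega)) hWx)
    · -- x ∈ Y : replacement by p 0 gives a ZFS that is too small
      set Z : Set V := insert (p 0) (Y \ {x}) with hZ
      have hZz : IsZFS G Z := by
        apply zfs_absorb hWx
        intro s hs
        have hpath := up_all hm hchain hnbr0 hnbrS
          (Forced.init (Set.mem_insert _ _) : Forced G Z (p 0))
        rcases hs.1 with h | h | h
        · exact h ▸ hpath 1 (by omega)
        · exact h ▸ hpath 2 (by omega)
        · exact Forced.init (Set.mem_insert_of_mem _ ⟨h, hs.2⟩)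
      have hc1 : (Y \ {x}).ncard = Y.ncard - 1 :=
        Set.ncard_diff_singleton_of_mem hxY
      have hc2 : Z.ncard ≤ (Y \ {x}).ncard + 1 := Set.ncard_insert_le _ _
      have hc3 := hqle Z hZz
      have hc4 : 0 < Y.ncard := (Set.ncard_pos (Set.toFinite _)).mpr ⟨x, hxY⟩
      omega
  intro hwf
  exact hWne (hwf W ⟨hWz, hWmin⟩)
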